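/- Let n be a natural number and a, b, c, d real numbers such that all Pochhammer symbols (c)_k, (d)_k, (1−a−n)_k, (1−b−n)_k are nonzero for 0 ≤ k ≤ n. Then ∑_{k=0}^n [(−n)_k (a)_k (b)_k]/[(c)_k (d)_k k!] = (−1)^n [(a)_n (b)_n]/[(c)_n (d)_n] · ∑_{k=0}^n [(−n)_k (1−c−n)_k (1−d−n)_k]/[(1−a−n)_k (1−b−n)_k k!]. -/

import Mathlib

/-- The Pochhammer symbol `(a)_k = a (a+1) ⋯ (a+k-1)` over ℝ. -/
noncomputable def poch (a : ℝ) (k : ℕ) : ℝ := (ascPochhammer ℝ k).eval a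

lemma poch_succ (x : ℝ) (k : ℕ) : poch x (k+1) = x * poch (x+1) k := by
  simp [poch, ascPochhammer_succ_left, Polynomial.eval_comp]

lemma poch_add (x : ℝ) (m k : ℕ) : poch x (m + k) = poch x m * poch (x + m) k := by
  simp [poch, ← ascPochhammer_mul, Polynomial.eval_comp]

lemma poch_reflect (k : ℕ) : ∀ y : ℝ, poch (1 - y - k) k = (-1)^k * poch y k := by
  induction k with
  | zero => intro y; simp [poch]
  | succ k ih =>
    intro y
    have h1 : (1 : ℝ) - y - (k+1 : ℕ) = -(y+k) := by push_cast; ring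
    have h2 : -(y+k) + 1 = 1 - y - k := by ring
    rw [h1, poch_succ, h2, ih y]
    have : poch y (k+1) = poch y k * (y + k) := by
      have := poch_add y k 1
      simp only [poch] at this ⊢
      simpa [mul_comm] using this
    rw [this]; ring

lemma poch_nat (m k : ℕ) : poch ((m:ℝ) + 1) k * m.factorial = ((m + k).factorial : ℝ) := by
  induction k with
  | zero => simp [poch]
  | succ k ih =>
    have : poch ((m:ℝ)+1) (k+1) = poch ((m:ℝ)+1) k * ((m:ℝ)+1+k) := by
      have := poch_add ((m:ℝ)+1) k 1
      simp only [poch] at this ⊢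
      simpa [mul_comm] using this
    rw [this]
    have : (m + (k+1)).factorial = (m + k + 1) * (m + k).factorial := by
      rw [← Nat.factorial_succ]; ring_nf
    rw [this]
    push_cast
    rw [← ih]; ring

theorem thomae_A4 (n : ℕ) (a b c d : ℝ)
    (hc : ∀ k ≤ n, poch c k ≠ 0) (hd : ∀ k ≤ n, poch d k ≠ 0)
    (h1 : ∀ k ≤ n, poch (1 - a - n) k ≠ 0)
    (h2 : ∀ k ≤ n, poch (1 - b - n) k ≠ 0) :
    ∑ k ∈ Finset.range (n + 1),
        (poch (-(n : ℝ)) k * poch a k * poch b k) /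
          (poch c k * poch d k * (k.factorial : ℝ)) =
      (-1 : ℝ) ^ n * (poch a n * poch b n) / (poch c n * poch d n) *
        ∑ k ∈ Finset.range (n + 1),
          (poch (-(n : ℝ)) k * poch (1 - c - n) k * poch (1 - d - n) k) /
            (poch (1 - a - n) k * poch (1 - b - n) k * (k.factorial : ℝ)) := by
  rw [Finset.mul_sum]
  rw [← Finset.sum_range_reflect]
  apply Finset.sum_congr rfl
  intro k hk
  rw [Finset.mem_range, Nat.lt_succ_iff] at hk
  obtain ⟨m, hm⟩ := Nat.exists_eq_add_of_le hk   -- n = k + m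
  have hmk : n + 1 - 1 - k = m := by omega
  rw [hmk]
  -- nonzeroness facts
  have hkm : k + m = n := hm.symm
  have hnm : (n : ℝ) = (k : ℝ) + m := by rw [hm]; push_cast; ring
  -- rewrite pochhammers
  have ecn : poch c n = poch c m * poch (c + m) k := by
    rw [← hkm, add_comm k m, poch_add]
  have edn : poch d n = poch d m * poch (d + m) k := by
    rw [← hkm, add_comm k m, poch_add]
  have ean : poch a n = poch a m * poch (a + m) k := by
    rw [← hkm, add_comm k m, poch_add]
  have ebn : poch b n = poch b m * poch (b + m) k := by
    rw [← hkm, add_comm k m, poch_add]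
  have rc : poch (1 - c - n) k = (-1)^k * poch (c + m) k := by
    have : (1:ℝ) - c - n = 1 - (c + m) - k := by rw [hnm]; ring
    rw [this, poch_reflect]
  have rd : poch (1 - d - n) k = (-1)^k * poch (d + m) k := by
    have : (1:ℝ) - d - n = 1 - (d + m) - k := by rw [hnm]; ring
    rw [this, poch_reflect]
  have ra : poch (1 - a - n) k = (-1)^k * poch (a + m) k := by
    have : (1:ℝ) - a - n = 1 - (a + m) - k := by rw [hnm]; ring
    rw [this, poch_reflect]
  have rb : poch (1 - b - n) k = (-1)^k * poch (b + m) k := by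
    have : (1:ℝ) - b - n = 1 - (b + m) - k := by rw [hnm]; ring
    rw [this, poch_reflect]
  -- poch (-n) k and poch (-n) m
  have pk : poch (-(n:ℝ)) k * (m.factorial : ℝ) = (-1)^k * (n.factorial : ℝ) := by
    have e : -(n:ℝ) = 1 - ((m:ℝ)+1) - k := by rw [hnm]; ring
    rw [e, poch_reflect, mul_assoc, poch_nat]
    have : m + k = n := by omega
    rw [this]
  have pm : poch (-(n:ℝ)) m * (k.factorial : ℝ) = (-1)^m * (n.factorial : ℝ) := by
    have e : -(n:ℝ) = 1 - ((k:ℝ)+1) - m := by rw [hnm]; ring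
    rw [e, poch_reflect, mul_assoc, poch_nat]
    have : k + m = n := by omega
    rw [this]
  -- nonzero denominators
  have hcm : poch c m ≠ 0 := hc m (by omega)
  have hdm : poch d m ≠ 0 := hd m (by omega)
  have hcn : poch c n ≠ 0 := hc n le_rfl
  have hdn : poch d n ≠ 0 := hd n le_rfl
  have hcmk : poch (c + m) k ≠ 0 := by
    intro h; apply hcn; rw [ecn, h, mul_zero]
  have hdmk : poch (d + m) k ≠ 0 := by
    intro h; apply hdn; rw [edn, h, mul_zero]
  have hamk : poch (a + m) k ≠ 0 := by
    intro h; apply h1 k hk; rw [ra, h, mul_zero]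
  have hbmk : poch (b + m) k ≠ 0 := by
    intro h; apply h2 k hk; rw [rb, h, mul_zero]
  have hkf : (k.factorial : ℝ) ≠ 0 := Nat.cast_ne_zero.mpr k.factorial_ne_zero
  have hmf : (m.factorial : ℝ) ≠ 0 := Nat.cast_ne_zero.mpr m.factorial_ne_zero
  have hnf : (n.factorial : ℝ) ≠ 0 := Nat.cast_ne_zero.mpr n.factorial_ne_zero
  -- express poch (-n) m and poch (-n) k via factorials
  have epm : poch (-(n:ℝ)) m = (-1)^m * (n.factorial : ℝ) / (k.factorial : ℝ) := by
    field_simp [← pm]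
    exact pm
  have epk : poch (-(n:ℝ)) k = (-1)^k * (n.factorial : ℝ) / (m.factorial : ℝ) := by
    field_simp [← pk]
    exact pk
  rw [ecn, edn, ean, ebn, rc, rd, ra, rb, epm, epk, ← hkm]
  have hpow : ((-1:ℝ))^(k+m) = (-1)^k * (-1)^m := by rw [pow_add]
  field_simp
  ring_nf
  norm_num [pow_mul']
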